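/- The twisted-cube support C(c,ℓ) is closed in ℝ^n if and only if the polytope P(c,ℓ) := {x ∈ ℝ^n : 0 ≤ x_j ≤ A_j(x) for all 1 ≤ j ≤ n} is equal to the convex hull of the finite set {m_σ : σ ∈ {+,−}^n}. -/

import Mathlib

/-- The affine functions `A_j(x) = ℓ_j − Σ_{k>j} c_{jk} x_k` (for the top index the sum
is empty so `A_n = ℓ_n`). Indices are 0-based via `Fin n`. -/
def Afun (n : ℕ) (c : Fin n → Fin n → ℤ) (L : Fin n → ℤ) (j : Fin n) (x : Fin n → ℝ) : ℝ :=
  (L j : ℝ) - ∑ k ∈ Finset.univ.filter (fun k => j < k), (c j k : ℝ) * x k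

/-- Condition (S-k): `A_k(x) < x_k < 0` or `0 ≤ x_k ≤ A_k(x)`. -/
def Scond (n : ℕ) (c : Fin n → Fin n → ℤ) (L : Fin n → ℤ) (k : Fin n) (x : Fin n → ℝ) : Prop :=
  (Afun n c L k x < x k ∧ x k < 0) ∨ (0 ≤ x k ∧ x k ≤ Afun n c L k x)

/-- The twisted-cube support `C(c,ℓ)`. -/
def Cset (n : ℕ) (c : Fin n → Fin n → ℤ) (L : Fin n → ℤ) : Set (Fin n → ℝ) :=
  {x | ∀ k, Scond n c L k x}

/-- The polytope `P(c,ℓ) = {x : 0 ≤ x_j ≤ A_j(x) for all j}`. -/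
def Pset (n : ℕ) (c : Fin n → Fin n → ℤ) (L : Fin n → ℤ) : Set (Fin n → ℝ) :=
  {x | ∀ j, 0 ≤ x j ∧ x j ≤ Afun n c L j x}

/-- Condition (P): for each `k`, whenever the coordinates above `k` satisfy
`0 ≤ x_j ≤ A_j(x)`, one has `A_k(x) ≥ 0`. (For the top index this says `ℓ_n ≥ 0`.) -/
def CondP (n : ℕ) (c : Fin n → Fin n → ℤ) (L : Fin n → ℤ) : Prop :=
  ∀ k : Fin n, ∀ x : Fin n → ℝ,
    (∀ j : Fin n, k < j → 0 ≤ x j ∧ x j ≤ Afun n c L j x) →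
    0 ≤ Afun n c L k x

/-- The Cartier data `m_σ` for a sign vector `σ` (`true` = `+`, `false` = `−`), defined by
downward recursion: `m_{σ,j} = 0` if `σ_j = +`, and `m_{σ,j} = A_j(m_σ)` if `σ_j = −`. -/
noncomputable def mvec (n : ℕ) (c : Fin n → Fin n → ℤ) (L : Fin n → ℤ)
    (σ : Fin n → Bool) (j : Fin n) : ℝ :=
  if σ j then 0
  else (L j : ℝ) - ∑ k ∈ (Finset.univ.filter (fun k => j < k)).attach,
      (c j k.1 : ℝ) * mvec n c L σ k.1
termination_by n - j.1
decreasing_by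
  have hk := Fin.lt_iff_val_lt_val.mp (Finset.mem_filter.mp k.2).2
  have := k.1.isLt
  omega

namespace TCaux

variable (n : ℕ) (c : Fin n → Fin n → ℤ) (L : Fin n → ℤ)

lemma afun_congr {j : Fin n} {x y : Fin n → ℝ} (h : ∀ k, j < k → x k = y k) :
    Afun n c L j x = Afun n c L j y := by
  unfold Afun
  congr 1
  refine Finset.sum_congr rfl fun k hk => ?_
  rw [h k (Finset.mem_filter.mp hk).2]

lemma mvec_eq (σ : Fin n → Bool) (j : Fin n) :
    mvec n c L σ j = if σ j then 0 else Afun n c L j (mvec n c L σ) := by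
  rw [mvec]
  by_cases hj : σ j = true
  · simp [hj]
  · simp only [hj, if_false, Bool.false_eq_true]
    unfold Afun
    congr 1
    exact Finset.sum_attach _ (fun k => (c j k : ℝ) * mvec n c L σ k)

lemma mvec_congr (σ σ' : Fin n → Bool) (j : Fin n) (h : ∀ i, j ≤ i → σ i = σ' i) :
    mvec n c L σ j = mvec n c L σ' j := by
  rw [mvec, mvec, h j le_rfl]
  by_cases hj : σ' j = true
  · simp [hj]
  · simp only [hj, if_false, Bool.false_eq_true]
    congr 1
    refine Finset.sum_congr rfl fun k hk => ?_
    have hjk : j < k.1 := (Finset.mem_filter.mp k.2).2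
    rw [mvec_congr σ σ' k.1 fun i hi => h i (le_of_lt (lt_of_lt_of_le hjk hi))]
termination_by n - j.1
decreasing_by
  have h1 : j.1 < k.1.1 := hjk
  have := k.1.isLt
  omega

lemma afun_continuous (j : Fin n) : Continuous (Afun n c L j) := by
  unfold Afun
  exact continuous_const.sub
    (continuous_finset_sum _ fun k _ => continuous_const.mul (continuous_apply k))

lemma afun_comb (j : Fin n) (w : (Fin n → Bool) → ℝ) (hw : ∑ σ, w σ = 1)
    (x : Fin n → ℝ) (hx : ∀ j', j < j' → x j' = ∑ σ, w σ * mvec n c L σ j') :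
    Afun n c L j x = ∑ σ, w σ * Afun n c L j (mvec n c L σ) := by
  unfold Afun
  symm
  calc ∑ σ, w σ * ((L j : ℝ) - ∑ k ∈ Finset.univ.filter (fun k => j < k),
          (c j k : ℝ) * mvec n c L σ k)
      = ∑ σ, (w σ * (L j : ℝ) - ∑ k ∈ Finset.univ.filter (fun k => j < k),
          w σ * ((c j k : ℝ) * mvec n c L σ k)) := by
        refine Finset.sum_congr rfl fun σ _ => ?_
        rw [mul_sub, Finset.mul_sum]
    _ = (∑ σ, w σ * (L j : ℝ)) - ∑ σ, ∑ k ∈ Finset.univ.filter (fun k => j < k),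
          w σ * ((c j k : ℝ) * mvec n c L σ k) := Finset.sum_sub_distrib _ _
    _ = (L j : ℝ) - ∑ k ∈ Finset.univ.filter (fun k => j < k), (c j k : ℝ) * x k := by
        congr 1
        · rw [← Finset.sum_mul, hw, one_mul]
        · rw [Finset.sum_comm]
          refine Finset.sum_congr rfl fun k hk => ?_
          rw [hx k (Finset.mem_filter.mp hk).2, Finset.mul_sum]
          exact Finset.sum_congr rfl fun σ _ => by ring

lemma sum_update (j₀ : Fin n) (w : (Fin n → Bool) → ℝ)
    (hw : ∀ σ, σ j₀ = false → w σ = 0) (a b : ℝ) (G : (Fin n → Bool) → ℝ) :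
    ∑ σ, ((if σ j₀ then a else b) * w (Function.update σ j₀ true)) * G σ
      = ∑ σ, w σ * (a * G σ + b * G (Function.update σ j₀ false)) := by
  classical
  rw [← Finset.sum_filter_add_sum_filter_not Finset.univ (fun σ => σ j₀ = true),
      ← Finset.sum_filter_add_sum_filter_not Finset.univ (fun σ => σ j₀ = true)
        (fun σ => w σ * (a * G σ + b * G (Function.update σ j₀ false)))]
  have h2 : ∑ σ ∈ Finset.univ.filter (fun σ => ¬ σ j₀ = true),
      w σ * (a * G σ + b * G (Function.update σ j₀ false)) = 0 := by
    refine Finset.sum_eq_zero fun σ hσ => ?_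
    rw [hw σ (Bool.not_eq_true _ |>.mp (Finset.mem_filter.mp hσ).2), zero_mul]
  rw [h2, add_zero]
  have h3 : ∑ σ ∈ Finset.univ.filter (fun σ => ¬ σ j₀ = true),
      ((if σ j₀ then a else b) * w (Function.update σ j₀ true)) * G σ
      = ∑ σ ∈ Finset.univ.filter (fun σ => σ j₀ = true), (b * w σ) * G (Function.update σ j₀ false) := by
    refine Finset.sum_nbij' (fun σ => Function.update σ j₀ true)
      (fun σ => Function.update σ j₀ false) ?_ ?_ ?_ ?_ ?_
    · intro σ hσ
      simp [Finset.mem_filter]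
    · intro σ hσ
      simp [Finset.mem_filter]
    · intro σ hσ
      have : σ j₀ = false := Bool.not_eq_true _ |>.mp (Finset.mem_filter.mp hσ).2
      funext i
      by_cases hi : i = j₀ <;> simp [hi, Function.update, this]
    · intro σ hσ
      have : σ j₀ = true := (Finset.mem_filter.mp hσ).2
      funext i
      by_cases hi : i = j₀ <;> simp [hi, Function.update, this]
    · intro σ hσ
      have h4 : σ j₀ = false := Bool.not_eq_true _ |>.mp (Finset.mem_filter.mp hσ).2
      have h5 : Function.update (Function.update σ j₀ true) j₀ false = σ := by
        funext i
        by_cases hi : i = j₀ <;> simp [hi, Function.update, h4]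
      rw [h4, h5]
      simp
  rw [h3]
  rw [← Finset.sum_add_distrib]
  refine Finset.sum_congr rfl fun σ hσ => ?_
  have h6 : σ j₀ = true := (Finset.mem_filter.mp hσ).2
  have h7 : Function.update σ j₀ true = σ := by
    funext i
    by_cases hi : i = j₀ <;> simp [hi, Function.update, h6]
  rw [h6, h7]
  simp only [if_true]
  ring

lemma key (k : ℕ) (x : Fin n → ℝ)
    (hx : ∀ j : Fin n, k ≤ j.1 → 0 ≤ x j ∧ x j ≤ Afun n c L j x) :
    ∃ w : (Fin n → Bool) → ℝ, (∀ σ, 0 ≤ w σ) ∧ (∑ σ, w σ) = 1 ∧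
      (∀ σ, w σ ≠ 0 → ∀ i : Fin n, i.1 < k → σ i = true) ∧
      (∀ j : Fin n, k ≤ j.1 → x j = ∑ σ, w σ * mvec n c L σ j) := by
  by_cases hk : n ≤ k
  · refine ⟨fun σ => if σ = (fun _ => true) then 1 else 0, ?_, ?_, ?_, ?_⟩
    · intro σ
      by_cases h : σ = (fun _ => true) <;> simp [h]
    · simp
    · intro σ hσ i hi
      by_cases h : σ = (fun _ => true)
      · rw [h]
      · simp [h] at hσ
    · intro j hj
      exact absurd j.isLt (by omega)
  · push_neg at hk
    set j₀ : Fin n := ⟨k, hk⟩ with hj₀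
    obtain ⟨w, hw0, hw1, hwsupp, hwx⟩ := key (k + 1) x (fun j hj => hx j (by omega))
    have hwsupp' : ∀ σ, σ j₀ = false → w σ = 0 := by
      intro σ hσ
      by_contra hne
      have := hwsupp σ hne j₀ (by simp [hj₀])
      rw [this] at hσ
      simp at hσ
    have hAx : Afun n c L j₀ x = ∑ σ, w σ * Afun n c L j₀ (mvec n c L σ) :=
      afun_comb n c L j₀ w hw1 x (fun j' hj' => hwx j' (by
        have h1 : j₀.1 < j'.1 := hj'
        have h2 : j₀.1 = k := rfl
        omega))
    set S : ℝ := ∑ σ, w σ * Afun n c L j₀ (mvec n c L σ) with hSdef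
    obtain ⟨hx0, hxA⟩ := hx j₀ (le_refl k)
    rw [hAx] at hxA
    have hS0 : 0 ≤ S := le_trans hx0 hxA
    set t : ℝ := if S = 0 then 0 else x j₀ / S with htdef
    have ht0 : 0 ≤ t := by
      rw [htdef]
      split
      · exact le_refl 0
      · exact div_nonneg hx0 hS0
    have ht1 : t ≤ 1 := by
      rw [htdef]
      split
      · exact zero_le_one
      · rename_i h
        rw [div_le_one (lt_of_le_of_ne hS0 (Ne.symm h))]
        exact hxA
    have hts : t * S = x j₀ := by
      rw [htdef]
      split
      · rename_i h
        rw [zero_mul]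
        rw [h] at hxA
        linarith
      · rename_i h
        field_simp
    refine ⟨fun σ => (if σ j₀ then 1 - t else t) * w (Function.update σ j₀ true),
      ?_, ?_, ?_, ?_⟩
    · intro σ
      refine mul_nonneg ?_ (hw0 _)
      split
      · linarith
      · exact ht0
    · have h := sum_update n j₀ w hwsupp' (1 - t) t (fun _ => 1)
      simp only [mul_one] at h
      rw [h]
      calc ∑ σ, w σ * (1 - t + t) = ∑ σ, w σ := by
            refine Finset.sum_congr rfl fun σ _ => by ring
        _ = 1 := hw1
    · intro σ hσ i hi
      have hwne : w (Function.update σ j₀ true) ≠ 0 := by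
        intro h
        apply hσ
        show (if σ j₀ = true then 1 - t else t) * w (Function.update σ j₀ true) = 0
        rw [h, mul_zero]
      have := hwsupp _ hwne i (by omega)
      rwa [Function.update_of_ne (by
        intro h
        rw [h] at hi
        simp [hj₀] at hi) true σ] at this
    · intro j hj
      rcases Nat.lt_or_ge k j.1 with hjk | hjk
      · -- case j > j₀
        have h := sum_update n j₀ w hwsupp' (1 - t) t (fun σ => mvec n c L σ j)
        rw [h]
        symm
        have hcongr : ∀ σ : Fin n → Bool,
            mvec n c L (Function.update σ j₀ false) j = mvec n c L σ j := by
          intro σ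
          refine mvec_congr n c L _ _ j fun i hi => ?_
          refine Function.update_of_ne (fun h => ?_) false σ
          rw [h] at hi
          have : j.1 ≤ k := hi
          omega
        calc ∑ σ, w σ * ((1 - t) * mvec n c L σ j
                + t * mvec n c L (Function.update σ j₀ false) j)
            = ∑ σ, w σ * mvec n c L σ j := by
              refine Finset.sum_congr rfl fun σ _ => ?_
              rw [hcongr σ]
              ring
          _ = x j := (hwx j (by omega)).symm
      · -- case j = j₀
        have hj' : j = j₀ := by
          apply Fin.ext
          simp [hj₀]
          omega
        subst hj'
        have h := sum_update n j₀ w hwsupp' (1 - t) t (fun σ => mvec n c L σ j₀)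
        rw [h]
        symm
        calc ∑ σ, w σ * ((1 - t) * mvec n c L σ j₀
                + t * mvec n c L (Function.update σ j₀ false) j₀)
            = ∑ σ, w σ * (t * Afun n c L j₀ (mvec n c L σ)) := by
              refine Finset.sum_congr rfl fun σ _ => ?_
              by_cases hwz : w σ = 0
              · rw [hwz, zero_mul, zero_mul]
              · have hσt : σ j₀ = true := hwsupp σ hwz j₀ (by omega)
                have h1 : mvec n c L σ j₀ = 0 := by rw [mvec_eq, hσt, if_pos rfl]
                have h2 : mvec n c L (Function.update σ j₀ false) j₀
                    = Afun n c L j₀ (mvec n c L σ) := by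
                  rw [mvec_eq]
                  rw [Function.update_self]
                  simp only [Bool.false_eq_true, if_false]
                  refine afun_congr n c L fun i hi => ?_
                  refine mvec_congr n c L _ _ i fun i' hi' => ?_
                  refine Function.update_of_ne (fun h => ?_) false σ
                  rw [h] at hi'
                  exact absurd (lt_of_lt_of_le hi hi') (lt_irrefl j₀)
                rw [h1, h2]
                ring
          _ = t * S := by
              rw [hSdef, Finset.mul_sum]
              exact Finset.sum_congr rfl fun σ _ => by ring
          _ = x j₀ := hts
termination_by n - k

lemma pset_subset_cset : Pset n c L ⊆ Cset n c L :=
  fun _ hx k => Or.inr (hx k)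

lemma pset_closed : IsClosed (Pset n c L) := by
  have h : Pset n c L = ⋂ j, ({x : Fin n → ℝ | 0 ≤ x j} ∩ {x | x j ≤ Afun n c L j x}) := by
    ext x
    simp only [Pset, Set.mem_setOf_eq, Set.mem_iInter, Set.mem_inter_iff]
  rw [h]
  exact isClosed_iInter fun j =>
    (isClosed_le continuous_const (continuous_apply j)).inter
      (isClosed_le (continuous_apply j) (afun_continuous n c L j))

lemma cset_feas (hP : CondP n c L) {x : Fin n → ℝ} (hx : x ∈ Cset n c L) (j : Fin n) :
    0 ≤ x j ∧ x j ≤ Afun n c L j x := by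
  have h0 : 0 ≤ Afun n c L j x := hP j x (fun j' hj' => cset_feas hP hx j')
  rcases hx j with ⟨h1, h2⟩ | h
  · exact absurd h0 (not_le.mpr (h1.trans h2))
  · exact h
termination_by n - j.1
decreasing_by
  have h1 : j.1 < j'.1 := hj'
  have := j'.isLt
  omega

lemma mvec_mem_pset (hP : CondP n c L) (σ : Fin n → Bool) (j : Fin n) :
    0 ≤ mvec n c L σ j ∧ mvec n c L σ j ≤ Afun n c L j (mvec n c L σ) := by
  have h0 : 0 ≤ Afun n c L j (mvec n c L σ) :=
    hP j _ (fun j' hj' => mvec_mem_pset hP σ j')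
  rw [mvec_eq]
  by_cases hj : σ j = true
  · rw [hj, if_pos rfl]
    exact ⟨le_refl 0, h0⟩
  · rw [if_neg (by simpa using hj)]
    exact ⟨h0, le_refl _⟩
termination_by n - j.1
decreasing_by
  have h1 : j.1 < j'.1 := hj'
  have := j'.isLt
  omega

lemma condP_of_mem (hm : ∀ σ, mvec n c L σ ∈ Pset n c L) : CondP n c L := by
  intro k x hfeas
  obtain ⟨w, hw0, hw1, _, hwx⟩ := key n c L (k.1 + 1) x
    (fun j hj => hfeas j (by rwa [Fin.lt_def, ← Nat.succ_le_iff]))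
  have h : Afun n c L k x = ∑ σ, w σ * Afun n c L k (mvec n c L σ) :=
    afun_comb n c L k w hw1 x (fun j' hj' => hwx j' (by
      have : k.1 < j'.1 := hj'
      omega))
  rw [h]
  refine Finset.sum_nonneg fun σ _ => mul_nonneg (hw0 σ) ?_
  exact le_trans (hm σ k).1 (hm σ k).2

lemma afun_affine (j : Fin n) (x y : Fin n → ℝ) (a b : ℝ) (hab : a + b = 1) :
    Afun n c L j (a • x + b • y) = a * Afun n c L j x + b * Afun n c L j y := by
  unfold Afun
  have h : ∑ k ∈ Finset.univ.filter (fun k => j < k), (c j k : ℝ) * (a • x + b • y) k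
      = a * (∑ k ∈ Finset.univ.filter (fun k => j < k), (c j k : ℝ) * x k)
      + b * (∑ k ∈ Finset.univ.filter (fun k => j < k), (c j k : ℝ) * y k) := by
    rw [Finset.mul_sum, Finset.mul_sum, ← Finset.sum_add_distrib]
    refine Finset.sum_congr rfl fun k _ => ?_
    simp only [Pi.add_apply, Pi.smul_apply, smul_eq_mul]
    ring
  rw [h]
  linear_combination (-(L j : ℝ)) * hab

lemma convex_pset : Convex ℝ (Pset n c L) := by
  intro x hx y hy a b ha hb hab
  intro j
  have h := afun_affine n c L j x y a b hab
  have hxy : (a • x + b • y) j = a * x j + b * y j := by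
    simp [Pi.add_apply, Pi.smul_apply, smul_eq_mul]
  constructor
  · rw [hxy]
    exact add_nonneg (mul_nonneg ha (hx j).1) (mul_nonneg hb (hy j).1)
  · rw [hxy, h]
    exact add_le_add (mul_le_mul_of_nonneg_left (hx j).2 ha)
      (mul_le_mul_of_nonneg_left (hy j).2 hb)

lemma pset_eq (hm : ∀ σ, mvec n c L σ ∈ Pset n c L) :
    Pset n c L = convexHull ℝ (Set.range (fun σ : Fin n → Bool => mvec n c L σ)) := by
  apply Set.Subset.antisymm
  · intro x hx
    obtain ⟨w, hw0, hw1, _, hwx⟩ := key n c L 0 x (fun j _ => hx j)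
    have hx' : x = ∑ σ, w σ • mvec n c L σ := by
      funext j
      rw [Finset.sum_apply]
      simpa [smul_eq_mul] using hwx j (Nat.zero_le _)
    rw [hx', ← Finset.centerMass_eq_of_sum_1 _ _ hw1]
    exact Finset.centerMass_mem_convexHull _ (fun σ _ => hw0 σ) (by rw [hw1]; norm_num)
      (fun σ _ => Set.mem_range_self σ)
  · exact convexHull_min (Set.range_subset_iff.mpr hm) (convex_pset n c L)

noncomputable def fill (x : Fin n → ℝ) (k : Fin n) (s : ℝ) (i : Fin n) : ℝ :=
  if k < i then x i
  else if i = k then s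
  else min 0 ((L i : ℝ) - ∑ j ∈ (Finset.univ.filter (fun j => i < j)).attach,
      (c i j.1 : ℝ) * fill x k s j.1) / 2
termination_by n - i.1
decreasing_by
  have hk := Fin.lt_iff_val_lt_val.mp (Finset.mem_filter.mp j.2).2
  have := j.1.isLt
  omega

lemma fill_eq (x : Fin n → ℝ) (k : Fin n) (s : ℝ) (i : Fin n) :
    fill n c L x k s i = if k < i then x i
      else if i = k then s
      else min 0 (Afun n c L i (fill n c L x k s)) / 2 := by
  rw [fill]
  rcases lt_trichotomy k i with h | h | h
  · rw [if_pos h, if_pos h]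
  · subst h
    rw [if_neg (lt_irrefl k), if_neg (lt_irrefl k), if_pos rfl, if_pos rfl]
  · rw [if_neg (asymm h), if_neg (asymm h), if_neg (ne_of_lt h), if_neg (ne_of_lt h)]
    unfold Afun
    rw [Finset.sum_attach _ (fun j => (c i j : ℝ) * fill n c L x k s j)]

lemma fill_gt (x : Fin n → ℝ) (k : Fin n) (s : ℝ) {i : Fin n} (h : k < i) :
    fill n c L x k s i = x i := by
  rw [fill_eq, if_pos h]

lemma fill_self (x : Fin n → ℝ) (k : Fin n) (s : ℝ) :
    fill n c L x k s k = s := by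
  rw [fill_eq, if_neg (lt_irrefl k), if_pos rfl]

lemma fill_cont (x : Fin n → ℝ) (k : Fin n) (i : Fin n) :
    Continuous (fun s => fill n c L x k s i) := by
  have h : (fun s => fill n c L x k s i) = fun s =>
      if k < i then x i
      else if i = k then s
      else min 0 ((L i : ℝ) - ∑ j ∈ (Finset.univ.filter (fun j => i < j)).attach,
          (c i j.1 : ℝ) * fill n c L x k s j.1) / 2 := by
    funext s
    rw [fill]
  rw [h]
  by_cases h1 : k < i
  · simp only [if_pos h1]
    exact continuous_const
  · simp only [if_neg h1]
    by_cases h2 : i = k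
    · simp only [if_pos h2]
      exact continuous_id
    · simp only [if_neg h2]
      refine Continuous.div_const ?_ 2
      refine Continuous.min continuous_const ?_
      refine Continuous.sub continuous_const ?_
      refine continuous_finset_sum _ fun j _ => ?_
      exact Continuous.mul continuous_const (fill_cont x k j.1)
termination_by n - i.1
decreasing_by
  have hk := Fin.lt_iff_val_lt_val.mp (Finset.mem_filter.mp j.2).2
  have := j.1.isLt
  omega

lemma afun_fill_eq (x : Fin n → ℝ) (k : Fin n) (s : ℝ) {i : Fin n} (h : k ≤ i) :
    Afun n c L i (fill n c L x k s) = Afun n c L i x :=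
  afun_congr n c L fun j hj => fill_gt n c L x k s (lt_of_le_of_lt h hj)

lemma fill_mem (x : Fin n → ℝ) (k : Fin n)
    (hup : ∀ j, k < j → 0 ≤ x j ∧ x j ≤ Afun n c L j x)
    {s : ℝ} (hs1 : Afun n c L k x < s) (hs2 : s < 0) :
    fill n c L x k s ∈ Cset n c L := by
  intro i
  rcases lt_trichotomy k i with h | h | h
  · right
    rw [fill_gt n c L x k s h, afun_fill_eq n c L x k s (le_of_lt h)]
    exact hup i h
  · subst h
    left
    rw [fill_self, afun_fill_eq n c L x k s le_rfl]
    exact ⟨hs1, hs2⟩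
  · rw [Scond, fill_eq, if_neg (asymm h), if_neg (ne_of_lt h)]
    rcases le_or_gt 0 (Afun n c L i (fill n c L x k s)) with hA | hA
    · right
      rw [min_eq_left hA, zero_div]
      exact ⟨le_refl 0, hA⟩
    · left
      rw [min_eq_right (le_of_lt hA)]
      constructor <;> linarith

lemma not_closed (h : ¬ CondP n c L) : ¬ IsClosed (Cset n c L) := by
  intro hcl
  unfold CondP at h
  push_neg at h
  obtain ⟨k, x, hup, hA⟩ := h
  set a : ℝ := Afun n c L k x with ha
  have hg : Continuous (fun s => fill n c L x k s) :=
    continuous_pi fun i => fill_cont n c L x k i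
  have himg : (fun s => fill n c L x k s) '' Set.Ioo a 0 ⊆ Cset n c L := by
    rintro _ ⟨s, hs, rfl⟩
    exact fill_mem n c L x k hup hs.1 hs.2
  have hmem : fill n c L x k a ∈ closure (Cset n c L) := by
    have h1 : a ∈ closure (Set.Ioo a 0) := by
      rw [closure_Ioo (ne_of_lt hA)]
      exact ⟨le_rfl, le_of_lt hA⟩
    have h2 : fill n c L x k a ∈ (fun s => fill n c L x k s) '' closure (Set.Ioo a 0) :=
      ⟨a, h1, rfl⟩
    have h3 := image_closure_subset_closure_image hg (s := Set.Ioo a 0) h2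
    exact closure_mono himg h3
  rw [hcl.closure_eq] at hmem
  rcases hmem k with ⟨h1, _⟩ | ⟨h1, _⟩
  · rw [fill_self, afun_fill_eq n c L x k a le_rfl] at h1
    exact lt_irrefl a h1
  · rw [fill_self] at h1
    exact absurd (lt_of_le_of_lt h1 hA) (lt_irrefl 0)

end TCaux

/-- `C(c,ℓ)` is closed iff the polytope `P(c,ℓ)` is the convex hull of
the finite set `{m_σ : σ ∈ {+,−}^n}`. -/
theorem isClosed_Cset_iff_Pset_eq_convexHull (n : ℕ) (hn : 0 < n)
    (c : Fin n → Fin n → ℤ) (L : Fin n → ℤ) :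
    IsClosed (Cset n c L) ↔
      Pset n c L = convexHull ℝ (Set.range (fun σ : Fin n → Bool => mvec n c L σ)) := by
  constructor
  · intro hcl
    have hP : CondP n c L := by
      by_contra h
      exact TCaux.not_closed n c L h hcl
    exact TCaux.pset_eq n c L (fun σ j => TCaux.mvec_mem_pset n c L hP σ j)
  · intro heq
    have hm : ∀ σ, mvec n c L σ ∈ Pset n c L := fun σ => by
      rw [heq]
      exact subset_convexHull ℝ _ (Set.mem_range_self σ)
    have hP : CondP n c L := TCaux.condP_of_mem n c L hm
    have hCeq : Cset n c L = Pset n c L :=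
      Set.Subset.antisymm (fun x hx j => TCaux.cset_feas n c L hP hx j)
        (TCaux.pset_subset_cset n c L)
    rw [hCeq]
    exact TCaux.pset_closed n c L
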